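/- For the axially symmetric discrete Euler top (I2 = I3), the periodicity condition x1² = μ_n²·4I2²/(I1-I2)² is equivalent to the relation I2·H1 - H2 = (μ_n²/(1+μ_n²))·4I1I2²/(I2-I1) among the invariants H1 = (I1x1² + I2x2² + I2x3²)/(1 - α2α3x1²) and H2 = (I1²x1² + I2²x2² + I2²x3²)/(1 - α2α3x1²), where α2α3 = -(I1-I2)²/(4I2²). -/

import Mathlib

/-- for the axially symmetric top, the periodicity condition
`x1² = μ_n² 4I2²/(I1-I2)²` is equivalent to the relation
`I2 H1 - H2 = (μ_n²/(1+μ_n²)) 4 I1 I2²/(I2-I1)` among the invariants. -/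
theorem axial_euler_top_invariant_relation
    (I1 I2 : ℝ) (hI1 : I1 ≠ 0) (hI2 : I2 ≠ 0) (h12 : I1 ≠ I2)
    (x1 x2 x3 : ℝ) (n : ℕ) (hn : 3 ≤ n) (μ H1 H2 : ℝ)
    (hμ : μ = Real.sqrt ((1 - Real.cos (2 * Real.pi / n)) / (1 + Real.cos (2 * Real.pi / n))))
    (hH1 : H1 = (I1*x1^2 + I2*x2^2 + I2*x3^2) / (1 + (I1 - I2)^2*x1^2/(4*I2^2)))
    (hH2 : H2 = (I1^2*x1^2 + I2^2*x2^2 + I2^2*x3^2) / (1 + (I1 - I2)^2*x1^2/(4*I2^2))) :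
    x1^2 = μ^2 * (4*I2^2) / (I1 - I2)^2 ↔
      I2*H1 - H2 = (μ^2 / (1 + μ^2)) * (4*I1*I2^2) / (I2 - I1) := by
  have hsub : I1 - I2 ≠ 0 := sub_ne_zero.mpr h12
  have hsub' : I2 - I1 ≠ 0 := sub_ne_zero.mpr (Ne.symm h12)
  have hμ1 : (1:ℝ) + μ^2 ≠ 0 := by positivity
  have hDne : (1:ℝ) + (I1 - I2)^2*x1^2/(4*I2^2) ≠ 0 := by positivity
  subst hH1 hH2
  constructor
  · intro h
    rw [h]
    field_simp
    ring
  · intro h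
    field_simp at h ⊢
    have hc : (4*I1*I2^2) ≠ 0 :=
      mul_ne_zero (mul_ne_zero (by norm_num) hI1) (pow_ne_zero _ hI2)
    refine mul_left_cancel₀ hc ?_
    linear_combination (4*I2^2) * h
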